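/- Let s ∈ (0,1). The principal value integral PV ∫_{-∞}^{∞} (1+r)_+^{s-1} · r / |r|^{1+2s} dr equals 0, where (t)_+^{s-1} denotes |t|^{s-2} t when t > 0 and 0 otherwise. Equivalently, lim_{ε→0} [ -∫_0^{1-ε} t^{s-1} (1-t)^{-2s} dt + ∫_{1+ε}^{∞} t^{s-1} (t-1)^{-2s} dt ] = 0. -/

import Mathlib

open MeasureTheory Set Filter

private lemma aux_integrable (s a : ℝ) (hs0 : 0 < s) (ha0 : 0 < a) (ha1 : a < 1) :
    IntegrableOn (fun t : ℝ => t ^ (s - 1) * (1 - t) ^ (-(2 * s))) (Ioo 0 a) := by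
  have hg : IntegrableOn (fun t : ℝ => (1 - a) ^ (-(2 * s)) * t ^ (s - 1)) (Ioo 0 a) := by
    have h : IntegrableOn (fun t : ℝ => t ^ (s - 1)) (Ioo 0 a) := by
      have := (intervalIntegral.intervalIntegrable_rpow' (a := 0) (b := a)
        (by linarith : (-1:ℝ) < s - 1))
      rw [intervalIntegrable_iff_integrableOn_Ioo_of_le ha0.le] at this
      exact this
    exact h.const_mul _
  refine Integrable.mono' hg ?_ ?_
  · refine (ContinuousOn.mul ?_ ?_).aestronglyMeasurable measurableSet_Ioo
    · exact fun x hx => (Real.continuousAt_rpow_const x _ (Or.inl hx.1.ne')).continuousWithinAt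
    · refine ContinuousOn.rpow_const (by fun_prop) fun x hx => Or.inl (by simp; linarith [hx.2])
  · refine (ae_restrict_iff' measurableSet_Ioo).2 (ae_of_all _ fun t ht => ?_)
    have h1 : (0:ℝ) < t := ht.1
    have h2 : (0:ℝ) < 1 - t := by linarith [ht.2]
    rw [Real.norm_eq_abs, abs_of_nonneg (by positivity), mul_comm]
    refine mul_le_mul_of_nonneg_right ?_ (Real.rpow_nonneg h1.le _)
    exact Real.rpow_le_rpow_of_nonpos (by linarith) (by linarith [ht.2]) (by linarith)

private lemma aux_subst (s ε : ℝ) (hε : 0 < ε) :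
    ∫ t in Ioi (1 + ε), t ^ (s - 1) * (t - 1) ^ (-(2 * s)) =
      ∫ t in Ioo (0:ℝ) (1 + ε)⁻¹, t ^ (s - 1) * (1 - t) ^ (-(2 * s)) := by
  have himg : Inv.inv '' Ioi (1 + ε) = Ioo (0:ℝ) (1 + ε)⁻¹ := by
    rw [Set.image_inv_eq_inv, Set.inv_Ioi₀ (by linarith)]
  rw [← himg, integral_image_eq_integral_abs_deriv_smul measurableSet_Ioi
    (fun x hx => (hasDerivAt_inv
      (by simp at hx; intro h; rw [h] at hx; linarith : x ≠ 0)).hasDerivWithinAt)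
    (inv_injective.injOn)]
  refine setIntegral_congr_fun measurableSet_Ioi fun x hx => ?_
  have hx1 : (1:ℝ) < x := by have := mem_Ioi.1 hx; linarith
  have hx0 : (0:ℝ) < x := by linarith
  have hx2 : (0:ℝ) < x - 1 := by linarith
  rw [smul_eq_mul, abs_neg, abs_inv, abs_of_pos (by positivity : (0:ℝ) < x ^ 2)]
  have h1 : (1:ℝ) - x⁻¹ = (x - 1) / x := by field_simp
  rw [h1, Real.div_rpow hx2.le hx0.le, Real.inv_rpow hx0.le, ← Real.rpow_neg hx0.le,
    ← Real.rpow_natCast x 2, ← Real.rpow_neg hx0.le, div_eq_mul_inv,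
    ← Real.rpow_neg hx0.le]
  rw [show (x ^ (-(2:ℕ):ℝ)) * (x ^ (-(s-1)) * ((x-1) ^ (-(2*s)) * x ^ (-(-(2*s))))) =
      (x ^ (-(2:ℕ):ℝ)) * x ^ (-(s-1)) * x ^ (-(-(2*s))) * (x-1) ^ (-(2*s)) by ring,
    ← Real.rpow_add hx0, ← Real.rpow_add hx0]
  norm_num
  exact Or.inl (by rw [show (-2:ℝ) + (1 - s) + 2 * s = s - 1 by ring])

/-- For `s ∈ (0,1)`, the principal value
`PV ∫_{-∞}^{∞} (1+r)_+^{s-1} r / |r|^{1+2s} dr = 0`, expressed equivalently (after the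
substitution `t = 1 + r`) as
`lim_{ε→0⁺} [ -∫_0^{1-ε} t^{s-1}(1-t)^{-2s} dt + ∫_{1+ε}^∞ t^{s-1}(t-1)^{-2s} dt ] = 0`. -/
theorem stmt1 (s : ℝ) (hs0 : 0 < s) (hs1 : s < 1) :
    Tendsto
      (fun ε : ℝ =>
        -(∫ t in Ioo (0 : ℝ) (1 - ε), t ^ (s - 1) * (1 - t) ^ (-(2 * s))) +
          ∫ t in Ioi (1 + ε), t ^ (s - 1) * (t - 1) ^ (-(2 * s)))
      (nhdsWithin 0 (Ioi 0)) (nhds 0) := by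
  set f : ℝ → ℝ := fun t => t ^ (s - 1) * (1 - t) ^ (-(2 * s)) with hf
  set F : ℝ → ℝ := fun ε =>
    -(∫ t in Ioo (0 : ℝ) (1 - ε), f t) + ∫ t in Ioi (1 + ε), t ^ (s - 1) * (t - 1) ^ (-(2 * s))
    with hF
  have key : ∀ ε ∈ Ioo (0:ℝ) (1/2), ‖F ε‖ ≤ 8 * ε ^ (2 - 2 * s) := by
    intro ε hεm
    obtain ⟨hε, hε2⟩ := hεm
    set a : ℝ := 1 - ε with ha
    set b : ℝ := (1 + ε)⁻¹ with hb
    have ha0 : 0 < a := by rw [ha]; linarith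
    have hb1 : b < 1 := inv_lt_one_of_one_lt₀ (by linarith)
    have hab : a < b := by
      rw [ha, hb, ← one_div, lt_div_iff₀ (by linarith : (0:ℝ) < 1 + ε)]; nlinarith
    have hIb : IntegrableOn f (Ioo 0 b) := aux_integrable s b hs0 (by positivity) hb1
    have hIa : IntegrableOn f (Ioo 0 a) := hIb.mono_set (Ioo_subset_Ioo_right hab.le)
    have hIab : IntegrableOn f (Ico a b) :=
      hIb.mono_set (fun x hx => ⟨lt_of_lt_of_le ha0 hx.1, hx.2⟩)
    have hsplit : ∫ t in Ioo (0:ℝ) b, f t = (∫ t in Ioo (0:ℝ) a, f t) + ∫ t in Ico a b, f t := by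
      rw [← Set.Ioo_union_Ico_eq_Ioo ha0 hab.le,
        setIntegral_union (Ico_disjoint_Ico_same.mono_left Ioo_subset_Ico_self)
          measurableSet_Ico hIa hIab]
    have hFe : F ε = ∫ t in Ico a b, f t := by
      rw [hF]; dsimp only
      rw [aux_subst s ε hε, ← hb, hsplit]; ring
    have hvol : (volume (Ico a b)).toReal ≤ ε ^ 2 := by
      rw [Real.volume_Ico, ENNReal.toReal_ofReal (by linarith)]
      have : b ≤ 1 - ε + ε ^ 2 := by
        rw [hb, ← one_div, div_le_iff₀ (by linarith : (0:ℝ) < 1 + ε)]; nlinarith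
      rw [ha]; linarith
    have hbound : ∀ x ∈ Ico a b, ‖f x‖ ≤ 2 * (4 * ε ^ (-(2 * s))) := by
      intro x hx
      have hx0 : (0:ℝ) < x := lt_of_lt_of_le ha0 hx.1
      have hx1 : x < 1 := lt_trans hx.2 hb1
      have h1x : (0:ℝ) < 1 - x := by linarith
      have hεx : ε / 2 ≤ 1 - x := by
        have h1 : 1 - b ≤ 1 - x := by linarith [hx.2]
        have h2 : ε / 2 ≤ 1 - b := by
          rw [hb, ← one_div, le_sub_iff_add_le, div_add_div _ _ (by norm_num : (2:ℝ) ≠ 0)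
            (by linarith : (1:ℝ) + ε ≠ 0), div_le_one (by positivity)]
          nlinarith
        linarith
      rw [Real.norm_eq_abs, abs_of_nonneg (by positivity)]
      have h1 : x ^ (s - 1) ≤ 2 := by
        have e1 : x ^ (s - 1) ≤ (1/2 : ℝ) ^ (s - 1) :=
          Real.rpow_le_rpow_of_nonpos (by norm_num) (by rw [ha] at hx; linarith [hx.1])
            (by linarith)
        have e2 : (1/2 : ℝ) ^ (s - 1) = (2:ℝ) ^ (1 - s) := by
          rw [one_div, Real.inv_rpow (by norm_num), ← Real.rpow_neg (by norm_num)]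
          norm_num
        have e3 : (2:ℝ) ^ (1 - s) ≤ (2:ℝ) ^ (1:ℝ) :=
          Real.rpow_le_rpow_of_exponent_le (by norm_num) (by linarith)
        rw [Real.rpow_one] at e3
        linarith [e1, e2 ▸ e1]
      have h2 : (1 - x) ^ (-(2 * s)) ≤ 4 * ε ^ (-(2 * s)) := by
        have e1 : (1 - x) ^ (-(2 * s)) ≤ (ε/2) ^ (-(2 * s)) :=
          Real.rpow_le_rpow_of_nonpos (by positivity) hεx (by linarith)
        have e2 : (ε/2) ^ (-(2 * s)) = ε ^ (-(2 * s)) * (2:ℝ) ^ (2 * s) := by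
          rw [Real.div_rpow hε.le (by norm_num), Real.rpow_neg (by norm_num : (0:ℝ) ≤ 2),
            div_eq_mul_inv, inv_inv]
        have e3 : (2:ℝ) ^ (2 * s) ≤ 4 := by
          have := Real.rpow_le_rpow_of_exponent_le (by norm_num : (1:ℝ) ≤ 2)
            (by linarith : 2 * s ≤ (2:ℝ))
          rwa [show ((2:ℝ) ^ (2:ℝ)) = 4 by
            rw [show (2:ℝ) = ((2:ℕ):ℝ) from rfl, Real.rpow_natCast]; norm_num] at this
        have e4 : ε ^ (-(2 * s)) * (2:ℝ) ^ (2 * s) ≤ ε ^ (-(2 * s)) * 4 :=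
          mul_le_mul_of_nonneg_left e3 (Real.rpow_nonneg hε.le _)
        rw [e2] at e1; linarith
      exact mul_le_mul h1 h2 (Real.rpow_nonneg h1x.le _) (by norm_num)
    have hnorm : ‖F ε‖ ≤ 2 * (4 * ε ^ (-(2 * s))) * (volume (Ico a b)).toReal := by
      rw [hFe]
      exact norm_setIntegral_le_of_norm_le_const (measure_Ico_lt_top : volume (Ico a b) < ⊤) hbound
    have h5 : 2 * (4 * ε ^ (-(2 * s))) * (volume (Ico a b)).toReal ≤
        2 * (4 * ε ^ (-(2 * s))) * ε ^ 2 :=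
      mul_le_mul_of_nonneg_left hvol (by positivity)
    have h6 : 2 * (4 * ε ^ (-(2 * s))) * ε ^ 2 = 8 * ε ^ (2 - 2 * s) := by
      rw [show ε ^ 2 = ε ^ (2:ℝ) by
          rw [show (2:ℝ) = ((2:ℕ):ℝ) from rfl, Real.rpow_natCast]]
      rw [mul_assoc, mul_assoc, ← Real.rpow_add hε,
        show -(2 * s) + 2 = 2 - 2 * s by ring]
      ring
    linarith
  have hg0 : Tendsto (fun ε : ℝ => 8 * ε ^ (2 - 2 * s)) (nhdsWithin 0 (Ioi 0)) (nhds 0) := by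
    have c := (Real.continuousAt_rpow_const 0 (2 - 2 * s) (Or.inr (by linarith))).tendsto
    rw [Real.zero_rpow (by linarith : (2:ℝ) - 2 * s ≠ 0)] at c
    have c2 : Tendsto (fun x : ℝ => x ^ (2 - 2 * s)) (nhdsWithin 0 (Ioi 0)) (nhds 0) :=
      c.mono_left nhdsWithin_le_nhds
    simpa using c2.const_mul (8:ℝ)
  rw [tendsto_zero_iff_norm_tendsto_zero]
  refine squeeze_zero' (Eventually.of_forall fun _ => norm_nonneg _) ?_ hg0
  filter_upwards [Ioo_mem_nhdsGT_of_mem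
    (show (0:ℝ) ∈ Ico (0:ℝ) (1/2) from ⟨le_refl _, by norm_num⟩)] with ε hε
  exact key ε hε
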